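/- Let M ≥ 1 and let P ∈ 𝒫_M. Then for every u ∈ W^{1,p}, the function t ↦ P(u(t), I^α[u](t), u̇(t), ᶜD^α[u](t), t) belongs to L^M(a,b;ℝ). -/

import Mathlib

open MeasureTheory Set
open scoped ENNReal

/-- The left Riemann–Liouville fractional integral of order `α` with base point `a`:
`I^α[f](t) = (1/Γ(α)) ∫_a^t (t-y)^(α-1) f(y) dy`. -/
noncomputable def RL {d : ℕ} (a α : ℝ) (f : ℝ → EuclideanSpace ℝ (Fin d)) (t : ℝ) :
    EuclideanSpace ℝ (Fin d) :=
  (1 / Real.Gamma α) • ∫ y in Ioo a t, ((t - y) ^ (α - 1)) • f y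

/-- `u ∈ W^{1,p}(a,b;ℝ^d)` with derivative `v`: `v ∈ L^p` and
`u(t) = u(a) + ∫_a^t v(s) ds` for all `t ∈ [a,b]`. -/
def IsW1p {d : ℕ} (a b p : ℝ) (u v : ℝ → EuclideanSpace ℝ (Fin d)) : Prop :=
  MemLp v (ENNReal.ofReal p) (volume.restrict (Ioo a b)) ∧
  ∀ t ∈ Icc a b, u t = u a + ∫ s in Ioo a t, v s

/-- `P ∈ 𝒫_M`: `P(x1,x2,x3,x4,t) = Σ_{k=0}^N c_k(x1,t) ‖x2‖^{d_{2,k}} ‖x3‖^{d_{3,k}} ‖x4‖^{d_{4,k}}`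
on `(ℝ^d)^4 × [a,b]`, with `c_k ≥ 0` continuous and `0 ≤ d_{i,k}`,
`d_{2,k} + d_{3,k} + d_{4,k} ≤ p/M`. -/
def MemP {d : ℕ} (a b p M : ℝ)
    (P : EuclideanSpace ℝ (Fin d) → EuclideanSpace ℝ (Fin d) → EuclideanSpace ℝ (Fin d) →
      EuclideanSpace ℝ (Fin d) → ℝ → ℝ) : Prop :=
  ∃ (N : ℕ) (c : ℕ → EuclideanSpace ℝ (Fin d) → ℝ → ℝ) (d2 d3 d4 : ℕ → ℝ),
    (∀ k, k ≤ N → ContinuousOn (fun q : EuclideanSpace ℝ (Fin d) × ℝ => c k q.1 q.2)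
        (univ ×ˢ Icc a b)) ∧
    (∀ k, k ≤ N → ∀ x t, 0 ≤ c k x t) ∧
    (∀ k, k ≤ N → 0 ≤ d2 k ∧ 0 ≤ d3 k ∧ 0 ≤ d4 k ∧ d2 k + d3 k + d4 k ≤ p / M) ∧
    (∀ x1 x2 x3 x4 : EuclideanSpace ℝ (Fin d), ∀ t ∈ Icc a b,
      P x1 x2 x3 x4 t =
        ∑ k ∈ Finset.range (N + 1), c k x1 t * ‖x2‖ ^ d2 k * ‖x3‖ ^ d3 k * ‖x4‖ ^ d4 k)

section Aux

variable {d : ℕ}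

/-- The kernel `y ↦ (t-y)^(β-1)` is integrable on `(a,t)`. -/
lemma kernel_intOn {β : ℝ} (hβ : 0 < β) (a t : ℝ) (hat : a ≤ t) :
    IntegrableOn (fun y : ℝ => (t - y) ^ (β - 1)) (Ioo a t) volume := by
  have h1 : IntervalIntegrable (fun x : ℝ => x ^ (β - 1)) volume 0 (t - a) :=
    intervalIntegral.intervalIntegrable_rpow' (by linarith)
  have h2 := (h1.comp_sub_left t).symm
  simp only [sub_zero, sub_sub_cancel] at h2
  exact ((intervalIntegrable_iff_integrableOn_Ioc_of_le hat).1 h2).mono_set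
    Ioo_subset_Ioc_self

lemma kernel_integral_le {β : ℝ} (hβ : 0 < β) {a b t : ℝ} (hat : a ≤ t) (htb : t ≤ b) :
    ∫ y in Ioo a t, (t - y) ^ (β - 1) ≤ (b - a) ^ β / β := by
  have h0 : ∫ y in Ioo a t, (t - y) ^ (β - 1) = (t - a) ^ β / β := by
    rw [← integral_Ioc_eq_integral_Ioo, ← intervalIntegral.integral_of_le hat,
      intervalIntegral.integral_comp_sub_left (fun x : ℝ => x ^ (β - 1)) t]
    rw [sub_self, integral_rpow (Or.inl (by linarith))]
    rw [sub_add_cancel, Real.zero_rpow hβ.ne', sub_zero]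
  rw [h0]
  have hle : (t - a) ^ β ≤ (b - a) ^ β :=
    Real.rpow_le_rpow (by linarith) (by linarith) hβ.le
  exact (div_le_div_iff_of_pos_right hβ).2 hle

/-- Measurability of the Riemann–Liouville fractional integral. -/
lemma RL_aestronglyMeasurable {f : ℝ → EuclideanSpace ℝ (Fin d)}
    (hf : StronglyMeasurable f) (a β : ℝ) (μ : Measure ℝ) [SFinite μ] :
    AEStronglyMeasurable (RL a β f) μ := by
  have hset : MeasurableSet {q : ℝ × ℝ | a < q.2 ∧ q.2 < q.1} :=
    (measurableSet_lt measurable_const measurable_snd).inter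
      (measurableSet_lt measurable_snd measurable_fst)
  have hker : StronglyMeasurable
      fun q : ℝ × ℝ => ((q.1 - q.2) ^ (β - 1)) • f q.2 :=
    ((measurable_fst.sub measurable_snd).pow_const (β - 1)).stronglyMeasurable.smul
      (hf.comp_measurable measurable_snd)
  have hF := hker.indicator hset
  have heq : RL a β f = fun t => (1 / Real.Gamma β) •
      ∫ y, ({q : ℝ × ℝ | a < q.2 ∧ q.2 < q.1}).indicator
        (fun q : ℝ × ℝ => ((q.1 - q.2) ^ (β - 1)) • f q.2) (t, y) := by
    funext t
    rw [RL, ← integral_indicator measurableSet_Ioo]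
    congr 1
  rw [heq]
  exact (hF.aestronglyMeasurable.integral_prod_right' (ν := volume)).const_smul (1 / Real.Gamma β)

/-- Pointwise bound for the fractional integral of a bounded function. -/
lemma norm_RL_le {f : ℝ → EuclideanSpace ℝ (Fin d)} {K a b β t : ℝ} (hβ : 0 < β)
    (hbd : ∀ y ∈ Ioo a b, ‖f y‖ ≤ K) (hK : 0 ≤ K) (hat : a ≤ t) (htb : t ≤ b) :
    ‖RL a β f t‖ ≤ (1 / Real.Gamma β) * (K * ((b - a) ^ β / β)) := by
  have hΓ : 0 < Real.Gamma β := Real.Gamma_pos_of_pos hβ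
  rw [RL, norm_smul, Real.norm_eq_abs, abs_of_pos (by positivity)]
  have hint : IntegrableOn (fun y : ℝ => (t - y) ^ (β - 1) * K) (Ioo a t) volume :=
    (kernel_intOn hβ a t hat).mul_const K
  have h1 : ‖∫ y in Ioo a t, ((t - y) ^ (β - 1)) • f y‖
      ≤ ∫ y in Ioo a t, (t - y) ^ (β - 1) * K := by
    refine norm_integral_le_of_norm_le hint ?_
    filter_upwards [ae_restrict_mem measurableSet_Ioo] with y hy
    have h0 : (0:ℝ) ≤ (t - y) ^ (β - 1) := Real.rpow_nonneg (by linarith [hy.2]) _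
    rw [norm_smul, Real.norm_eq_abs, abs_of_nonneg h0]
    exact mul_le_mul_of_nonneg_left (hbd y ⟨hy.1, lt_of_lt_of_le hy.2 htb⟩) h0
  refine mul_le_mul_of_nonneg_left (h1.trans ?_) (by positivity)
  rw [integral_mul_const, mul_comm K]
  exact mul_le_mul_of_nonneg_right (kernel_integral_le hβ hat htb) hK

/-- `L^p → L^p` boundedness of the fractional integral (Young's inequality). -/
lemma RL_memLp {f : ℝ → EuclideanSpace ℝ (Fin d)} {a b p β : ℝ} (hab : a < b) (hp : 1 < p)
    (hβ0 : 0 < β)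
    (hf : StronglyMeasurable f) (hf0 : ∀ y, y ∉ Ioo a b → f y = 0)
    (hfp : MemLp f (ENNReal.ofReal p) (volume.restrict (Ioo a b))) :
    MemLp (RL a β f) (ENNReal.ofReal p) (volume.restrict (Ioo a b)) := by
  have hp0 : 0 < p := by linarith
  have hpe0 : ENNReal.ofReal p ≠ 0 := by simp [ENNReal.ofReal_eq_zero]; linarith
  have hpetop : ENNReal.ofReal p ≠ ∞ := ENNReal.ofReal_ne_top
  set q : ℝ := p / (p - 1) with hq
  have hq1 : 1 < q := by
    rw [hq, lt_div_iff₀ (by linarith)]; linarith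
  have hpq : Real.HolderConjugate p q := by
    rw [Real.holderConjugate_iff]; constructor
    · exact hp
    · rw [hq]; field_simp; ring
  have hq0 : q ≠ 0 := by positivity
  -- the kernel, as an `ℝ≥0∞`-valued function
  set k : ℝ → ℝ≥0∞ := (Ioo (0:ℝ) (b - a)).indicator
    (fun s => ENNReal.ofReal (s ^ (β - 1))) with hk
  have hk_meas : Measurable k :=
    ((measurable_id.pow_const _).ennreal_ofReal).indicator measurableSet_Ioo
  set g : ℝ → ℝ≥0∞ := fun y => (‖f y‖₊ : ℝ≥0∞) with hg
  have hg_meas : Measurable g := hf.measurable.enorm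
  have hK2 : Measurable fun z : ℝ × ℝ => k (z.1 - z.2) :=
    hk_meas.comp (measurable_fst.sub measurable_snd)
  set A : ℝ≥0∞ := ∫⁻ s, k s with hA
  have hA_lt : A < ∞ := by
    rw [hA, hk, lintegral_indicator measurableSet_Ioo _]
    have hint : IntegrableOn (fun s : ℝ => s ^ (β - 1)) (Ioo 0 (b - a)) volume := by
      have h1 : IntervalIntegrable (fun x : ℝ => x ^ (β - 1)) volume 0 (b - a) :=
        intervalIntegral.intervalIntegrable_rpow' (by linarith)
      exact ((intervalIntegrable_iff_integrableOn_Ioc_of_le (by linarith)).1 h1).mono_set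
        Ioo_subset_Ioc_self
    calc ∫⁻ s in Ioo 0 (b - a), ENNReal.ofReal (s ^ (β - 1))
        ≤ ∫⁻ s in Ioo 0 (b - a), (‖s ^ (β - 1)‖₊ : ℝ≥0∞) :=
          lintegral_mono fun s => Real.ofReal_le_enorm _
      _ < ∞ := hint.2
  -- translation invariance
  have hA_tr : ∀ y : ℝ, ∫⁻ t, k (t - y) = A := fun y =>
    (measurePreserving_sub_right volume y).lintegral_comp hk_meas
  have hA_refl : ∀ t : ℝ, ∫⁻ y, k (t - y) = A := fun t =>
    (Measure.measurePreserving_sub_left volume t).lintegral_comp hk_meas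
  set T : ℝ → ℝ≥0∞ := fun t => ∫⁻ y, k (t - y) * g y with hT
  -- pointwise bound
  have claim1 : ∀ t ∈ Ioo a b,
      (‖RL a β f t‖₊ : ℝ≥0∞) ≤ ENNReal.ofReal (1 / Real.Gamma β) * T t := by
    intro t ht
    have hΓ : 0 < Real.Gamma β := Real.Gamma_pos_of_pos hβ0
    rw [RL, nnnorm_smul, ENNReal.coe_mul,
      ← enorm_eq_nnnorm (1 / Real.Gamma β), Real.enorm_eq_ofReal (by positivity : (0:ℝ) ≤ 1 / Real.Gamma β)]
    refine mul_le_mul_right ?_ _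
    calc (‖∫ y in Ioo a t, ((t - y) ^ (β - 1)) • f y‖₊ : ℝ≥0∞)
        ≤ ∫⁻ y in Ioo a t, ‖((t - y) ^ (β - 1)) • f y‖₊ :=
          enorm_integral_le_lintegral_enorm _
      _ = ∫⁻ y in Ioo a t, k (t - y) * g y := by
          refine setLIntegral_congr_fun measurableSet_Ioo (fun y hy => ?_)
          have h1 : 0 < t - y := by linarith [hy.2]
          have h2 : t - y < b - a := by
            have := ht.2; have := hy.1; linarith
          rw [nnnorm_smul, ENNReal.coe_mul, hk,
            indicator_of_mem (by exact ⟨h1, h2⟩ : t - y ∈ Ioo (0:ℝ) (b - a)),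
            ← enorm_eq_nnnorm ((t - y) ^ (β - 1)), Real.enorm_eq_ofReal (Real.rpow_nonneg h1.le _)]
      _ ≤ ∫⁻ y, k (t - y) * g y := lintegral_mono' Measure.restrict_le_self le_rfl
  -- Hölder step
  have hfin : ∀ y : ℝ, g y ^ p ≠ ∞ := fun y =>
    (ENNReal.rpow_lt_top_of_nonneg hp0.le ENNReal.coe_ne_top).ne
  have claim2 : ∀ t : ℝ, T t ^ p ≤ A ^ (p - 1) * ∫⁻ y, k (t - y) * g y ^ p := by
    intro t
    have h1 : T t ≤ (∫⁻ y, k (t - y)) ^ (1 / q) *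
        (∫⁻ y, k (t - y) * g y ^ p) ^ (1 / p) := by
      have hmeas1 : AEMeasurable (fun y => k (t - y) ^ (1 / q)) volume :=
        ((hk_meas.comp (measurable_const.sub measurable_id)).pow_const _).aemeasurable
      have hmeas2 : AEMeasurable (fun y => k (t - y) ^ (1 / p) * g y) volume :=
        (((hk_meas.comp (measurable_const.sub measurable_id)).pow_const _).mul
          hg_meas).aemeasurable
      have H := ENNReal.lintegral_mul_le_Lp_mul_Lq volume hpq.symm hmeas1 hmeas2
      calc T t = ∫⁻ y, ((fun y => k (t - y) ^ (1 / q)) *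
            fun y => k (t - y) ^ (1 / p) * g y) y := by
            apply lintegral_congr fun y => ?_
            simp only [Pi.mul_apply]
            rw [← mul_assoc, ← ENNReal.rpow_add_of_nonneg _ _ (by positivity) (by positivity),
              one_div, one_div, hpq.symm.inv_add_inv_eq_one, ENNReal.rpow_one]
        _ ≤ (∫⁻ y, (k (t - y) ^ (1 / q)) ^ q) ^ (1 / q) *
            (∫⁻ y, (k (t - y) ^ (1 / p) * g y) ^ p) ^ (1 / p) := H
        _ = (∫⁻ y, k (t - y)) ^ (1 / q) *
            (∫⁻ y, k (t - y) * g y ^ p) ^ (1 / p) := by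
            congr 1
            · congr 1
              apply lintegral_congr fun y => ?_
              rw [← ENNReal.rpow_mul, one_div, inv_mul_cancel₀ hq0, ENNReal.rpow_one]
            · congr 1
              apply lintegral_congr fun y => ?_
              rw [ENNReal.mul_rpow_of_nonneg _ _ hp0.le, ← ENNReal.rpow_mul,
                one_div, inv_mul_cancel₀ hp0.ne', ENNReal.rpow_one]
    calc T t ^ p ≤ ((∫⁻ y, k (t - y)) ^ (1 / q) *
          (∫⁻ y, k (t - y) * g y ^ p) ^ (1 / p)) ^ p :=
          ENNReal.rpow_le_rpow h1 hp0.le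
      _ = A ^ (p - 1) * ∫⁻ y, k (t - y) * g y ^ p := by
          rw [ENNReal.mul_rpow_of_nonneg _ _ hp0.le, ← ENNReal.rpow_mul,
            ← ENNReal.rpow_mul, hA_refl t]
          have he1 : 1 / p * p = 1 := by field_simp
          have he2 : 1 / q * p = p - 1 := by
            rw [one_div, mul_comm, ← div_eq_mul_inv, hpq.div_conj_eq_sub_one]
          rw [he1, he2, ENNReal.rpow_one]
  -- Tonelli
  have swap : ∫⁻ t, ∫⁻ y, k (t - y) * g y ^ p = A * ∫⁻ y, g y ^ p := by
    rw [lintegral_lintegral_swap]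
    · calc ∫⁻ y, ∫⁻ t, k (t - y) * g y ^ p
          = ∫⁻ y, A * g y ^ p := by
            apply lintegral_congr fun y => ?_
            rw [lintegral_mul_const' _ _ (hfin y), hA_tr y]
        _ = A * ∫⁻ y, g y ^ p := lintegral_const_mul' _ _ hA_lt.ne
    · exact (hK2.mul ((hg_meas.comp measurable_snd).pow_const p)).aemeasurable
  -- finiteness of ∫ g^p
  have hB : ∫⁻ y, g y ^ p ≠ ∞ := by
    have heq : ∀ y : ℝ, g y ^ p = (Ioo a b).indicator (fun y => g y ^ p) y := by
      intro y
      by_cases hy : y ∈ Ioo a b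
      · rw [indicator_of_mem hy]
      · rw [indicator_of_notMem hy, hg]
        simp only [hf0 y hy, nnnorm_zero, ENNReal.coe_zero]
        exact ENNReal.zero_rpow_of_pos hp0
    have h2 := hfp.2
    rw [eLpNorm_eq_lintegral_rpow_enorm_toReal hpe0 hpetop, ENNReal.toReal_ofReal hp0.le] at h2
    have h3 : ∫⁻ y in Ioo a b, g y ^ p ≠ ∞ := by
      intro hcon
      change (∫⁻ y in Ioo a b, g y ^ p) ^ (1 / p) < ∞ at h2
      rw [hcon, ENNReal.top_rpow_of_pos (by positivity : (0:ℝ) < 1 / p)] at h2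
      exact absurd h2 (lt_irrefl _)
    calc ∫⁻ y, g y ^ p = ∫⁻ y in Ioo a b, g y ^ p := by
          rw [← lintegral_indicator measurableSet_Ioo _]
          exact lintegral_congr heq
      _ ≠ ∞ := h3
  -- assembly
  set c : ℝ≥0∞ := ENNReal.ofReal (1 / Real.Gamma β) with hc
  have hcp : c ^ p ≠ ∞ :=
    (ENNReal.rpow_lt_top_of_nonneg hp0.le ENNReal.ofReal_ne_top).ne
  have hAp : A ^ (p - 1) ≠ ∞ :=
    (ENNReal.rpow_lt_top_of_nonneg (by linarith) hA_lt.ne).ne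
  have final : ∫⁻ t in Ioo a b, (‖RL a β f t‖₊ : ℝ≥0∞) ^ p ≠ ∞ := by
    have step1 : ∫⁻ t in Ioo a b, (‖RL a β f t‖₊ : ℝ≥0∞) ^ p
        ≤ ∫⁻ t in Ioo a b, c ^ p * T t ^ p := by
      refine lintegral_mono_ae ?_
      filter_upwards [ae_restrict_mem measurableSet_Ioo] with t ht
      calc (‖RL a β f t‖₊ : ℝ≥0∞) ^ p ≤ (c * T t) ^ p :=
            ENNReal.rpow_le_rpow (claim1 t ht) hp0.le
        _ = c ^ p * T t ^ p := ENNReal.mul_rpow_of_nonneg _ _ hp0.le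
    refine ne_top_of_le_ne_top ?_ step1
    rw [lintegral_const_mul' _ _ hcp]
    refine ENNReal.mul_ne_top hcp ?_
    have step2 : ∫⁻ t in Ioo a b, T t ^ p ≤ ∫⁻ t, T t ^ p :=
      lintegral_mono' Measure.restrict_le_self le_rfl
    refine ne_top_of_le_ne_top ?_ step2
    have step3 : ∫⁻ t, T t ^ p ≤ ∫⁻ t, A ^ (p - 1) * ∫⁻ y, k (t - y) * g y ^ p :=
      lintegral_mono claim2
    refine ne_top_of_le_ne_top ?_ step3
    rw [lintegral_const_mul' _ _ hAp, swap]
    exact ENNReal.mul_ne_top hAp (ENNReal.mul_ne_top hA_lt.ne hB)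
  refine ⟨RL_aestronglyMeasurable hf a β _, ?_⟩
  rw [eLpNorm_eq_lintegral_rpow_enorm_toReal hpe0 hpetop, ENNReal.toReal_ofReal hp0.le]
  exact ENNReal.rpow_lt_top_of_nonneg (by positivity) final

end Aux

/-- If `M ≥ 1` and `P ∈ 𝒫_M`, then for every `u ∈ W^{1,p}` (with derivative `u̇ = v`)
the function `t ↦ P(u(t), I^α[u](t), u̇(t), ᶜD^α[u](t), t)` belongs to `L^M(a,b;ℝ)`,
where `ᶜD^α[u] = I^{1-α}[u̇]` is the left Caputo derivative. -/
theorem memP_comp_memLM {d : ℕ} (hd : 1 ≤ d) (a b : ℝ) (hab : a < b)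
    (p : ℝ) (hp : 1 < p) (α : ℝ) (hα : 0 < α) (hα1 : α < 1)
    (M : ℝ) (hM : 1 ≤ M)
    (P : EuclideanSpace ℝ (Fin d) → EuclideanSpace ℝ (Fin d) → EuclideanSpace ℝ (Fin d) →
      EuclideanSpace ℝ (Fin d) → ℝ → ℝ)
    (hP : MemP a b p M P)
    (u v : ℝ → EuclideanSpace ℝ (Fin d)) (huv : IsW1p a b p u v) :
    MemLp (fun t => P (u t) (RL a α u t) (v t) (RL a (1 - α) v t) t)
      (ENNReal.ofReal M) (volume.restrict (Ioo a b)) := by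
  obtain ⟨N, c, d2, d3, d4, hc_cont, hc_nonneg, hexp, hPsum⟩ := hP
  obtain ⟨hv_mem, hu_eq⟩ := huv
  have hp0 : 0 < p := by linarith
  have hM0 : 0 < M := by linarith
  haveI : IsFiniteMeasure (volume.restrict (Ioo a b)) := by
    constructor
    rw [Measure.restrict_apply_univ, Real.volume_Ioo]
    exact ENNReal.ofReal_lt_top
  have hpe1 : (1:ℝ≥0∞) ≤ ENNReal.ofReal p := by
    rw [← ENNReal.ofReal_one]; exact ENNReal.ofReal_le_ofReal hp.le
  have hpe0 : ENNReal.ofReal p ≠ 0 := by simp [ENNReal.ofReal_eq_zero]; linarith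
  have hpetop : ENNReal.ofReal p ≠ ∞ := ENNReal.ofReal_ne_top
  -- a strongly measurable version of `v`, cut off outside `(a,b)`
  set w : ℝ → EuclideanSpace ℝ (Fin d) := hv_mem.1.mk v with hwdef
  have hw_sm : StronglyMeasurable w := hv_mem.1.stronglyMeasurable_mk
  have hvw : v =ᵐ[volume.restrict (Ioo a b)] w := hv_mem.1.ae_eq_mk
  set W : ℝ → EuclideanSpace ℝ (Fin d) := (Ioo a b).indicator w with hWdef
  have hW_sm : StronglyMeasurable W := hw_sm.indicator measurableSet_Ioo
  have hvW : v =ᵐ[volume.restrict (Ioo a b)] W := by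
    filter_upwards [hvw, ae_restrict_mem measurableSet_Ioo] with t h1 h2
    rw [hWdef, indicator_of_mem h2]; exact h1
  have hW0 : ∀ y, y ∉ Ioo a b → W y = 0 := fun y hy => indicator_of_notMem hy w
  have hWmem : MemLp W (ENNReal.ofReal p) (volume.restrict (Ioo a b)) :=
    hv_mem.ae_eq hvW
  have hWint : Integrable W volume := by
    rw [hWdef, integrable_indicator_iff measurableSet_Ioo]
    exact (hv_mem.ae_eq hvw).integrable hpe1
  -- the continuous representative of `u`
  set U : ℝ → EuclideanSpace ℝ (Fin d) := fun y => u a + ∫ s in (a:ℝ)..y, W s with hUdef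
  have hUcont : Continuous U := continuous_const.add (hWint.continuous_primitive a)
  have hUu : ∀ t ∈ Icc a b, u t = U t := by
    intro t ht
    rw [hu_eq t ht, hUdef]
    congr 1
    have h1 : ∫ s in Ioo a t, v s = ∫ s in Ioo a t, W s :=
      integral_congr_ae (ae_restrict_of_ae_restrict_of_subset (Ioo_subset_Ioo_right ht.2) hvW)
    rw [h1, ← integral_Ioc_eq_integral_Ioo, ← intervalIntegral.integral_of_le ht.1]
  have hRLu : ∀ t ∈ Icc a b, RL a α u t = RL a α U t := by
    intro t ht
    rw [RL, RL]
    congr 1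
    refine setIntegral_congr_fun measurableSet_Ioo fun y hy => ?_
    rw [hUu y ⟨le_of_lt hy.1, le_trans (le_of_lt hy.2) ht.2⟩]
  have hRLv : ∀ t ∈ Icc a b, RL a (1 - α) v t = RL a (1 - α) W t := by
    intro t ht
    rw [RL, RL]
    congr 1
    refine integral_congr_ae ?_
    filter_upwards [ae_restrict_of_ae_restrict_of_subset (Ioo_subset_Ioo_right ht.2) hvW]
      with y hy
    rw [hy]
  -- bounds for `U` and its fractional integral
  obtain ⟨C1, hC1⟩ := isCompact_Icc.exists_bound_of_continuousOn hUcont.continuousOn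
  have hC1' : ∀ y ∈ Ioo a b, ‖U y‖ ≤ C1 := fun y hy => hC1 y ⟨hy.1.le, hy.2.le⟩
  have hC1nn : 0 ≤ C1 := le_trans (norm_nonneg _) (hC1 a ⟨le_rfl, hab.le⟩)
  set K2 : ℝ := (1 / Real.Gamma α) * (C1 * ((b - a) ^ α / α)) with hK2def
  have hK2bd : ∀ t ∈ Icc a b, ‖RL a α U t‖ ≤ K2 := fun t ht =>
    norm_RL_le hα hC1' hC1nn ht.1 ht.2
  -- the Caputo derivative is in L^p
  have hDmem : MemLp (RL a (1 - α) W) (ENNReal.ofReal p) (volume.restrict (Ioo a b)) :=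
    RL_memLp hab hp (by linarith) hW_sm hW0 hWmem
  -- reduce to the explicit sum
  have hae : (fun t => P (u t) (RL a α u t) (v t) (RL a (1 - α) v t) t)
      =ᵐ[volume.restrict (Ioo a b)] fun t => ∑ k ∈ Finset.range (N + 1),
        c k (U t) t * ‖RL a α U t‖ ^ d2 k * ‖W t‖ ^ d3 k * ‖RL a (1 - α) W t‖ ^ d4 k := by
    filter_upwards [ae_restrict_mem measurableSet_Ioo, hvW] with t ht htv
    have ht' : t ∈ Icc a b := ⟨ht.1.le, ht.2.le⟩
    rw [hPsum _ _ _ _ t ht']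
    refine Finset.sum_congr rfl fun k _ => ?_
    rw [hUu t ht', hRLu t ht', htv, hRLv t ht']
  refine MemLp.ae_eq hae.symm ?_
  refine memLp_finset_sum _ fun k hk => ?_
  have hkN : k ≤ N := Finset.mem_range_succ_iff.1 hk
  obtain ⟨h2nn, h3nn, h4nn, hsum⟩ := hexp k hkN
  -- the bounded factor is in L^∞
  have hg1 : MemLp (fun t => c k (U t) t * ‖RL a α U t‖ ^ d2 k) ∞
      (volume.restrict (Ioo a b)) := by
    have hcont : ContinuousOn (fun t => c k (U t) t) (Icc a b) :=
      (hc_cont k hkN).comp (hUcont.prodMk continuous_id).continuousOn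
        (fun t ht => ⟨mem_univ _, ht⟩)
    obtain ⟨C2, hC2⟩ := isCompact_Icc.exists_bound_of_continuousOn hcont
    refine memLp_top_of_bound ?_ (C2 * K2 ^ d2 k) ?_
    · have h1 : AEStronglyMeasurable (fun t => c k (U t) t)
          (volume.restrict (Ioo a b)) :=
        (hcont.aestronglyMeasurable measurableSet_Icc).mono_measure
          (Measure.restrict_mono Ioo_subset_Icc_self le_rfl)
      have h2 : AEStronglyMeasurable (fun t => ‖RL a α U t‖ ^ d2 k)
          (volume.restrict (Ioo a b)) :=
        ((RL_aestronglyMeasurable hUcont.stronglyMeasurable a α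
          (volume.restrict (Ioo a b))).norm.aemeasurable.pow_const
            (d2 k)).aestronglyMeasurable
      exact h1.mul h2
    · filter_upwards [ae_restrict_mem measurableSet_Ioo] with t ht
      have ht' : t ∈ Icc a b := ⟨ht.1.le, ht.2.le⟩
      rw [Real.norm_eq_abs, abs_mul]
      have b1 : |c k (U t) t| ≤ C2 := by rw [← Real.norm_eq_abs]; exact hC2 t ht'
      have b2 : |‖RL a α U t‖ ^ d2 k| ≤ K2 ^ d2 k := by
        rw [abs_of_nonneg (Real.rpow_nonneg (norm_nonneg _) _)]
        exact Real.rpow_le_rpow (norm_nonneg _) (hK2bd t ht') h2nn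
      exact mul_le_mul b1 b2 (abs_nonneg _) (le_trans (abs_nonneg _) b1)
  -- the L^p factors
  have h3 : MemLp (fun t => ‖W t‖ ^ d3 k)
      (ENNReal.ofReal p / ENNReal.ofReal (d3 k)) (volume.restrict (Ioo a b)) := by
    have := hWmem.norm_rpow_div (ENNReal.ofReal (d3 k))
    rwa [ENNReal.toReal_ofReal h3nn] at this
  have h4 : MemLp (fun t => ‖RL a (1 - α) W t‖ ^ d4 k)
      (ENNReal.ofReal p / ENNReal.ofReal (d4 k)) (volume.restrict (Ioo a b)) := by
    have := hDmem.norm_rpow_div (ENNReal.ofReal (d4 k))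
    rwa [ENNReal.toReal_ofReal h4nn] at this
  have hinv : ∀ s : ℝ, 1 / (ENNReal.ofReal p / ENNReal.ofReal s)
      = ENNReal.ofReal s / ENNReal.ofReal p := by
    intro s
    rw [one_div, ENNReal.inv_div (Or.inl ENNReal.ofReal_ne_top) (Or.inr hpe0)]
  have hr34 : 1 / (ENNReal.ofReal p / ENNReal.ofReal (d3 k + d4 k)) =
      1 / (ENNReal.ofReal p / ENNReal.ofReal (d3 k)) +
      1 / (ENNReal.ofReal p / ENNReal.ofReal (d4 k)) := by
    rw [hinv, hinv, hinv, ENNReal.ofReal_add h3nn h4nn, ENNReal.div_add_div_same]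
  have h34 : MemLp ((fun t => ‖W t‖ ^ d3 k) • fun t => ‖RL a (1 - α) W t‖ ^ d4 k)
      (ENNReal.ofReal p / ENNReal.ofReal (d3 k + d4 k))
      (volume.restrict (Ioo a b)) := by
      haveI : ENNReal.HolderTriple (ENNReal.ofReal p / ENNReal.ofReal (d3 k))
          (ENNReal.ofReal p / ENNReal.ofReal (d4 k)) (ENNReal.ofReal p / ENNReal.ofReal (d3 k + d4 k)) :=
        ⟨by simpa only [one_div] using hr34.symm⟩
      exact h4.smul h3
  have hterm : MemLp ((fun t => c k (U t) t * ‖RL a α U t‖ ^ d2 k) •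
      ((fun t => ‖W t‖ ^ d3 k) • fun t => ‖RL a (1 - α) W t‖ ^ d4 k))
      (ENNReal.ofReal p / ENNReal.ofReal (d3 k + d4 k))
      (volume.restrict (Ioo a b)) := h34.smul hg1
  have hle : ENNReal.ofReal M ≤ ENNReal.ofReal p / ENNReal.ofReal (d3 k + d4 k) := by
    rw [ENNReal.le_div_iff_mul_le (Or.inr hpe0) (Or.inl ENNReal.ofReal_ne_top),
      ← ENNReal.ofReal_mul hM0.le]
    apply ENNReal.ofReal_le_ofReal
    calc M * (d3 k + d4 k) ≤ M * (d2 k + d3 k + d4 k) :=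
          mul_le_mul_of_nonneg_left (by linarith) hM0.le
      _ ≤ M * (p / M) := mul_le_mul_of_nonneg_left hsum hM0.le
      _ = p := by field_simp
  have hfin := hterm.mono_exponent hle
  have heqf : (fun t => c k (U t) t * ‖RL a α U t‖ ^ d2 k * ‖W t‖ ^ d3 k *
      ‖RL a (1 - α) W t‖ ^ d4 k) = ((fun t => c k (U t) t * ‖RL a α U t‖ ^ d2 k) •
      ((fun t => ‖W t‖ ^ d3 k) • fun t => ‖RL a (1 - α) W t‖ ^ d4 k)) := by
    funext t
    simp only [Pi.smul_apply, Pi.mul_apply, smul_eq_mul]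
    ring
  rw [heqf]
  exact hfin
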